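/- Let P₁, P₂ be real numbers with P₁² + P₂² > 1, set s = √(P₁² + P₂² − 1), w(L) = 1 + P₁·sin L + P₂·cos L, and u(L) = (P₁ − (P₂ − 1)·tan(L/2))/s. Let L be a real number with cos(L/2) ≠ 0 and |u(L)| < 1. Then the function F(L) = −(2·P₁/s³)·artanh(u(L)) + (P₂ + cos L)/((P₁² + P₂² − 1)·w(L)) is differentiable at L with derivative F′(L) = sin L / w(L)². -/

import Mathlib

open Real

/-- The inverse hyperbolic tangent, `artanh x = ½ log((1+x)/(1−x))`. -/
noncomputable def Real.artanhLog (x : ℝ) : ℝ := (1 / 2) * Real.log ((1 + x) / (1 - x))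

set_option maxHeartbeats 2000000 in
/-- Closed-form antiderivative of `I_s2`: with `s = √(P₁² + P₂² - 1)`,
`w(L) = 1 + P₁ sin L + P₂ cos L` and `u(L) = (P₁ - (P₂ - 1) tan(L/2))/s`, the
function `F(L) = -(2P₁/s³)·artanh(u(L)) + (P₂ + cos L)/((P₁² + P₂² - 1) w(L))`
has derivative `sin L / w(L)²` at `L`. -/
theorem Is2_antiderivative (P₁ P₂ L : ℝ) (h : 1 < P₁ ^ 2 + P₂ ^ 2)
    (hc : cos (L / 2) ≠ 0)
    (hu : |(P₁ - (P₂ - 1) * tan (L / 2)) / Real.sqrt (P₁ ^ 2 + P₂ ^ 2 - 1)| < 1) :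
    HasDerivAt
      (fun x : ℝ =>
        -(2 * P₁ / Real.sqrt (P₁ ^ 2 + P₂ ^ 2 - 1) ^ 3) *
            Real.artanhLog ((P₁ - (P₂ - 1) * tan (x / 2)) / Real.sqrt (P₁ ^ 2 + P₂ ^ 2 - 1)) +
          (P₂ + cos x) / ((P₁ ^ 2 + P₂ ^ 2 - 1) * (1 + P₁ * sin x + P₂ * cos x)))
      (sin L / (1 + P₁ * sin L + P₂ * cos L) ^ 2) L := by
  have hc0 : (0:ℝ) < P₁ ^ 2 + P₂ ^ 2 - 1 := by linarith
  set c : ℝ := P₁ ^ 2 + P₂ ^ 2 - 1 with hc_def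
  set s : ℝ := Real.sqrt c with hs_def
  have hs_pos : 0 < s := Real.sqrt_pos.mpr hc0
  have hs2 : s ^ 2 = c := Real.sq_sqrt hc0.le
  set t : ℝ := tan (L / 2) with ht_def
  have h1t : (0:ℝ) < 1 + t ^ 2 := by positivity
  have hb2 : cos (L / 2) ^ 2 = 1 / (1 + t ^ 2) := by
    rw [← Real.inv_one_add_tan_sq hc, one_div, ht_def]
  -- double angle formulas in terms of t
  have hsin : sin L = 2 * t / (1 + t ^ 2) := by
    have h1 : sin L = 2 * sin (L / 2) * cos (L / 2) := by
      have := Real.sin_two_mul (L / 2)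
      rwa [show 2 * (L / 2) = L by ring] at this
    have h2 : sin (L / 2) = t * cos (L / 2) := by
      rw [ht_def, Real.tan_eq_sin_div_cos]; field_simp
    rw [h1, h2]
    have : cos (L / 2) * cos (L / 2) = 1 / (1 + t ^ 2) := by
      rw [← hb2]; ring
    calc 2 * (t * cos (L / 2)) * cos (L / 2) = 2 * t * (cos (L / 2) * cos (L / 2)) := by ring
      _ = 2 * t / (1 + t ^ 2) := by rw [this]; ring
  have hcosL : cos L = (1 - t ^ 2) / (1 + t ^ 2) := by
    have h1 : cos L = 2 * cos (L / 2) ^ 2 - 1 := by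
      have := Real.cos_two_mul (L / 2)
      rwa [show 2 * (L / 2) = L by ring] at this
    rw [h1, hb2]; field_simp; ring
  -- the value u at L
  set u : ℝ := (P₁ - (P₂ - 1) * t) / s with hu_def
  have hu1 : -1 < u := (abs_lt.mp hu).1
  have hu2 : u < 1 := (abs_lt.mp hu).2
  have h1pu : (0:ℝ) < 1 + u := by linarith
  have h1mu : (0:ℝ) < 1 - u := by linarith
  -- nonvanishing of w
  have hn2 : (P₁ - (P₂ - 1) * t) ^ 2 < s ^ 2 := by
    have habs : |P₁ - (P₂ - 1) * t| < s := by
      rw [abs_div, abs_of_pos hs_pos] at hu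
      exact (div_lt_one hs_pos).mp hu
    calc (P₁ - (P₂ - 1) * t) ^ 2 = |P₁ - (P₂ - 1) * t| ^ 2 := (sq_abs _).symm
      _ < s ^ 2 := by
          apply pow_lt_pow_left₀ habs (abs_nonneg _)
          norm_num
  have hwkey : s ^ 2 - (P₁ - (P₂ - 1) * t) ^ 2
      = (P₂ - 1) * (1 + t ^ 2) * (1 + P₁ * sin L + P₂ * cos L) := by
    rw [hs2, hsin, hcosL, hc_def]
    field_simp
    ring
  have hw : (1 + P₁ * sin L + P₂ * cos L) ≠ 0 := by
    intro h0
    rw [h0, mul_zero] at hwkey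
    nlinarith
  have hcw : c * (1 + P₁ * sin L + P₂ * cos L) ≠ 0 := mul_ne_zero hc0.ne' hw
  -- derivative of tan (x/2)
  have hhalf : HasDerivAt (fun x : ℝ => x / 2) (1 / 2) L := by
    simpa using (hasDerivAt_id L).div_const 2
  have htan : HasDerivAt (fun x : ℝ => tan (x / 2)) (1 / cos (L / 2) ^ 2 * (1 / 2)) L :=
    by have := (Real.hasDerivAt_tan hc).comp L hhalf; exact this
  -- derivative of u
  have hU : HasDerivAt (fun x : ℝ => (P₁ - (P₂ - 1) * tan (x / 2)) / s)
      ((0 - (P₂ - 1) * (1 / cos (L / 2) ^ 2 * (1 / 2))) / s) L :=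
    ((hasDerivAt_const L P₁).sub (htan.const_mul (P₂ - 1))).div_const s
  -- derivative of (1+u)/(1-u)
  set u' : ℝ := (0 - (P₂ - 1) * (1 / cos (L / 2) ^ 2 * (1 / 2))) / s with hu'_def
  have hg : HasDerivAt (fun x : ℝ =>
      (1 + (P₁ - (P₂ - 1) * tan (x / 2)) / s) / (1 - (P₁ - (P₂ - 1) * tan (x / 2)) / s))
      (((0 + u') * (1 - u) - (1 + u) * (0 - u')) / (1 - u) ^ 2) L := by
    exact ((hasDerivAt_const L 1).add hU).div ((hasDerivAt_const L 1).sub hU) h1mu.ne'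
  have hfval : (1 + u) / (1 - u) ≠ 0 := by positivity
  have hlog := hg.log hfval
  have hart : HasDerivAt (fun x : ℝ =>
      -(2 * P₁ / s ^ 3) * (1 / 2 * Real.log ((1 + (P₁ - (P₂ - 1) * tan (x / 2)) / s)
        / (1 - (P₁ - (P₂ - 1) * tan (x / 2)) / s))))
      (-(2 * P₁ / s ^ 3) * (1 / 2 *
        ((((0 + u') * (1 - u) - (1 + u) * (0 - u')) / (1 - u) ^ 2) / ((1 + u) / (1 - u))))) L :=
    (hlog.const_mul (1 / 2)).const_mul _
  -- derivative of second term
  have hden : HasDerivAt (fun x : ℝ => c * (1 + P₁ * sin x + P₂ * cos x))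
      (c * (0 + P₁ * cos L + P₂ * -sin L)) L := by
    exact (((hasDerivAt_const L 1).add ((Real.hasDerivAt_sin L).const_mul P₁)).add
      ((Real.hasDerivAt_cos L).const_mul P₂)).const_mul c
  have hsecond : HasDerivAt (fun x : ℝ => (P₂ + cos x) / (c * (1 + P₁ * sin x + P₂ * cos x)))
      (((0 + -sin L) * (c * (1 + P₁ * sin L + P₂ * cos L))
        - (P₂ + cos L) * (c * (0 + P₁ * cos L + P₂ * -sin L)))
        / (c * (1 + P₁ * sin L + P₂ * cos L)) ^ 2) L :=
    ((hasDerivAt_const L P₂).add (Real.hasDerivAt_cos L)).div hden hcw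
  -- clean value for the artanh part
  have hP2 : P₂ - 1 ≠ 0 := by
    intro h0
    rw [h0] at hwkey hn2
    simp only [zero_mul, sub_zero] at hwkey hn2
    nlinarith
  have hart' : HasDerivAt (fun x : ℝ =>
      -(2 * P₁ / s ^ 3) * (1 / 2 * Real.log ((1 + (P₁ - (P₂ - 1) * tan (x / 2)) / s)
        / (1 - (P₁ - (P₂ - 1) * tan (x / 2)) / s))))
      (P₁ / (c * (1 + P₁ * sin L + P₂ * cos L))) L := by
    convert hart using 1
    have hd1 : (((0 + u') * (1 - u) - (1 + u) * (0 - u')) / (1 - u) ^ 2) / ((1 + u) / (1 - u))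
        = 2 * u' / ((1 - u) * (1 + u)) := by
      field_simp
      ring
    have hd2 : (1 - u) * (1 + u)
        = (P₂ - 1) * (1 + t ^ 2) * (1 + P₁ * sin L + P₂ * cos L) / s ^ 2 := by
      rw [← hwkey, hu_def]
      field_simp
      ring
    have hd3 : u' = -((P₂ - 1) * (1 + t ^ 2)) / (2 * s) := by
      rw [hu'_def, hb2]
      field_simp
      ring
    rw [hd1, hd2, hd3, ← hs2]
    field_simp
  -- clean value for the second part
  have hsecond' : HasDerivAt (fun x : ℝ => (P₂ + cos x) / (c * (1 + P₁ * sin x + P₂ * cos x)))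
      (((P₂ ^ 2 - 1) * sin L - P₁ * (1 + P₂ * cos L))
        / (c * (1 + P₁ * sin L + P₂ * cos L) ^ 2)) L := by
    convert hsecond using 1
    have hpy : sin L ^ 2 + cos L ^ 2 = 1 := Real.sin_sq_add_cos_sq L
    rw [div_eq_div_iff (mul_ne_zero hc0.ne' (pow_ne_zero 2 hw)) (pow_ne_zero 2 hcw)]
    linear_combination (P₁ * c ^ 2 * (1 + P₁ * sin L + P₂ * cos L) ^ 2) * hpy
  have htot := hart'.add hsecond'
  simp only [Real.artanhLog]
  refine htot.congr_deriv ?_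
  rw [hc_def]
  have hc0' : P₁ ^ 2 + P₂ ^ 2 - 1 ≠ 0 := hc0.ne'
  field_simp
  ring
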